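/- Let 𝔤 be a Lie algebra over ℂ, V a complex vector space carrying a 𝔤-module structure and a ℂ-linear action of a group K. Call a subspace of V invariant if it is stable under both the 𝔤-action and the K-action, and assume every invariant subspace of V has an invariant complement. Suppose U ⊆ V is a nonzero K-stable subspace with the following properties: (i) V is generated by U as a 𝔤-module, i.e., V is spanned by U together with all vectors X₁⋯X_m·u with X₁,…,X_m ∈ 𝔤 and u ∈ U; (ii) U is irreducible as a representation of K, and every K-stable subspace of V that is K-equivariantly isomorphic to U is equal to U. Then V has no invariant subspaces other than 0 and V. -/

import Mathlib

/-- Let `𝔤` be a Lie algebra over ℂ and `V` a complex vector space carrying a `𝔤`-module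
structure and a ℂ-linear action of a group `K` (no compatibility assumed).  A subspace is
invariant if stable under both actions; assume every invariant subspace has an invariant
complement.  Suppose `U ⊆ V` is a nonzero `K`-stable subspace such that: (i) `V` is
generated by `U` as a `𝔤`-module; (ii) `U` is irreducible as a `K`-representation, and
every `K`-stable subspace of `V` that is `K`-equivariantly isomorphic to `U` equals `U`
(the `K`-type `U` occurs exactly once).  Then `V` has no invariant subspaces other than
`0` and `V`. -/
theorem stmt_5 {𝔤 V K : Type*} [LieRing 𝔤] [LieAlgebra ℂ 𝔤]
    [AddCommGroup V] [Module ℂ V] [LieRingModule 𝔤 V] [LieModule ℂ 𝔤 V]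
    [Group K] (ρ : K →* (V ≃ₗ[ℂ] V))
    (hcompl : ∀ W : Submodule ℂ V,
      (∀ X : 𝔤, ∀ v ∈ W, ⁅X, v⁆ ∈ W) → (∀ k : K, ∀ v ∈ W, ρ k v ∈ W) →
      ∃ W' : Submodule ℂ V,
        ((∀ X : 𝔤, ∀ v ∈ W', ⁅X, v⁆ ∈ W') ∧ (∀ k : K, ∀ v ∈ W', ρ k v ∈ W')) ∧
        IsCompl W W')
    (U : Submodule ℂ V) (hUne : U ≠ ⊥)
    (hUstab : ∀ k : K, ∀ v ∈ U, ρ k v ∈ U)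
    -- (i) `V` is generated by `U` as a `𝔤`-module:
    (hgen : ∀ W : Submodule ℂ V, U ≤ W → (∀ X : 𝔤, ∀ v ∈ W, ⁅X, v⁆ ∈ W) → W = ⊤)
    -- (ii) `U` is irreducible as a `K`-representation ...
    (hUirr : ∀ W ≤ U, (∀ k : K, ∀ v ∈ W, ρ k v ∈ W) → W = ⊥ ∨ W = U)
    -- ... and every `K`-stable subspace of `V` `K`-equivariantly isomorphic to `U` is `U`:
    (hmult : ∀ U' : Submodule ℂ V, (∀ k : K, ∀ v ∈ U', ρ k v ∈ U') →
      (∃ e : U ≃ₗ[ℂ] U', ∀ (k : K) (u : U),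
        (e ⟨ρ k (u : V), hUstab k (u : V) u.2⟩ : V) = ρ k ((e u : U') : V)) → U' = U) :
    ∀ W : Submodule ℂ V,
      (∀ X : 𝔤, ∀ v ∈ W, ⁅X, v⁆ ∈ W) → (∀ k : K, ∀ v ∈ W, ρ k v ∈ W) →
      W = ⊥ ∨ W = ⊤ := by
  intro W hWg hWk
  obtain ⟨W', ⟨hW'g, hW'k⟩, hc⟩ := hcompl W hWg hWk
  rcases hUirr (U ⊓ W) inf_le_left
      (fun k v hv => ⟨hUstab k v hv.1, hWk k v hv.2⟩) with h0 | hU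
  · -- U ⊓ W = ⊥ : project U into W' and conclude W = ⊥
    left
    set π := W'.linearProjOfIsCompl W hc.symm with hπ
    set g : V →ₗ[ℂ] V := W'.subtype.comp π with hg
    have hg_mem : ∀ v : V, g v ∈ W' := fun v => (π v).2
    have hsub : ∀ v : V, v - g v ∈ W := by
      intro v
      have hv : v ∈ W ⊔ W' := by rw [hc.sup_eq_top]; trivial
      obtain ⟨w, hw, w', hw', rfl⟩ := Submodule.mem_sup.mp hv
      have h1 : g w = 0 := by
        exact (congrArg (W'.subtype) (W'.linearProjOfIsCompl_apply_right hc.symm ⟨w, hw⟩)).trans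
          (map_zero _)
      have h2 : g w' = w' := by
        exact
          congrArg (W'.subtype) (Submodule.linearProjOfIsCompl_apply_left hc.symm ⟨w', hw'⟩)
      simp only [map_add, h1, h2]
      simpa using hw
    have hequiv : ∀ (k : K) (v : V), g (ρ k v) = ρ k (g v) := by
      intro k v
      have h1 : g (ρ k v) - ρ k (g v) ∈ W' :=
        W'.sub_mem (hg_mem _) (hW'k k _ (hg_mem v))
      have h2 : g (ρ k v) - ρ k (g v) ∈ W := by
        have ha : ρ k v - g (ρ k v) ∈ W := hsub _
        have hb : ρ k v - ρ k (g v) ∈ W := by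
          have := hWk k _ (hsub v)
          simpa [map_sub] using this
        have := W.sub_mem hb ha
        simpa using this
      have : g (ρ k v) - ρ k (g v) ∈ W ⊓ W' := ⟨h2, h1⟩
      rw [hc.inf_eq_bot] at this
      exact sub_eq_zero.mp (Submodule.mem_bot (R := ℂ) |>.mp this)
    -- U maps injectively into W', with image a K-stable copy of U
    set U' : Submodule ℂ V := U.map g with hU'
    have hU'k : ∀ k : K, ∀ v ∈ U', ρ k v ∈ U' := by
      rintro k v ⟨u, hu, rfl⟩
      exact ⟨ρ k u, hUstab k u hu, hequiv k u⟩
    have hginj : ∀ u ∈ U, g u = 0 → u = 0 := by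
      intro u hu hgu
      have : u ∈ U ⊓ W := ⟨hu, by simpa [hgu] using hsub u⟩
      rw [h0] at this
      exact Submodule.mem_bot (R := ℂ) |>.mp this
    set f : U →ₗ[ℂ] U' :=
      LinearMap.codRestrict U' (g.comp U.subtype)
        (fun u => Submodule.mem_map_of_mem u.2) with hf
    have hfbij : Function.Bijective f := by
      constructor
      · intro a b hab
        have h1 : g (a : V) = g (b : V) := by simpa [f, g] using congrArg Subtype.val hab
        have : ((a : V) - b) = 0 := by
          apply hginj _ (U.sub_mem a.2 b.2)
          simp [map_sub, h1]
        exact Subtype.ext (sub_eq_zero.mp this)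
      · rintro ⟨v, u, hu, rfl⟩
        exact ⟨⟨u, hu⟩, rfl⟩
    have hmain : U' = U := by
      refine hmult U' hU'k ⟨LinearEquiv.ofBijective f hfbij, fun k u => ?_⟩
      show g (ρ k (u : V)) = ρ k (g (u : V))
      exact hequiv k u
    have hUW' : U ≤ W' := by
      intro u hu
      rw [← hmain] at hu
      obtain ⟨u', _, rfl⟩ := hu
      exact hg_mem u'
    have hW'top : W' = ⊤ := hgen W' hUW' hW'g
    have := hc.inf_eq_bot
    rw [hW'top, inf_top_eq] at this
    exact this
  · -- U ≤ W : then W = ⊤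
    right
    exact hgen W (fun u hu => (hU.ge hu).2) hWg
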